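/- arXiv:2103.14873 — 2 statements merged into one kernel-verified Lean document; each statement's English description precedes it below -/
import Mathlib

section
/- Let φ, ρ_v, ρ_r ∈ ℝ³, and let Λ(φ, ρ_v, ρ_r) denote the 5×5 block matrix [[skew(φ), ρ_v, ρ_r], [0₁ₓ₃, 0, 0], [0₁ₓ₃, 0, 0]]. Then the matrix exponential exp(Λ(φ, ρ_v, ρ_r)) equals the 5×5 block matrix [[exp(skew(φ)), J·ρ_v, J·ρ_r], [0₁ₓ₃, 1, 0], [0₁ₓ₃, 0, 1]], where J = Γ₁(skew(φ)). -/
set_option maxHeartbeats 1000000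


open Matrix

/-- The skew-symmetric matrix of a vector `ω ∈ ℝ³`, so that `skew ω *ᵥ v = ω × v`. -/
def skew (ω : Fin 3 → ℝ) : Matrix (Fin 3) (Fin 3) ℝ :=
  !![0, -ω 2, ω 1; ω 2, 0, -ω 0; -ω 1, ω 0, 0]

/-- `Γ_m(A) = Σ_{n=0}^∞ Aⁿ/(n+m)!`; `Γ₁(skew φ)` is the left Jacobian `J` of `SO(3)`. -/
noncomputable def Gamma {d : ℕ} (m : ℕ) (A : Matrix (Fin d) (Fin d) ℝ) :
    Matrix (Fin d) (Fin d) ℝ :=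
  ∑' n : ℕ, (((n + m).factorial : ℝ))⁻¹ • A ^ n

/-- The Lie algebra element `Λ(φ, ρ_v, ρ_r)`: the 5×5 block matrix
`[[skew φ, ρ_v, ρ_r], [0, 0, 0], [0, 0, 0]]`. -/
def lamSE23 (φ ρv ρr : Fin 3 → ℝ) : Matrix (Fin 5) (Fin 5) ℝ :=
  Matrix.of fun i j =>
    if hi : (i : ℕ) < 3 then
      if hj : (j : ℕ) < 3 then skew φ ⟨i, hi⟩ ⟨j, hj⟩
      else if (j : ℕ) = 3 then ρv ⟨i, hi⟩
      else ρr ⟨i, hi⟩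
    else 0

/-- The 5×5 block matrix `[[C, v, r], [0, 1, 0], [0, 0, 1]]` of `SE₂(3)`. -/
def se23 (C : Matrix (Fin 3) (Fin 3) ℝ) (v r : Fin 3 → ℝ) :
    Matrix (Fin 5) (Fin 5) ℝ :=
  Matrix.of fun i j =>
    if hi : (i : ℕ) < 3 then
      if hj : (j : ℕ) < 3 then C ⟨i, hi⟩ ⟨j, hj⟩
      else if (j : ℕ) = 3 then v ⟨i, hi⟩
      else r ⟨i, hi⟩
    else if (i : ℕ) = (j : ℕ) then 1 else 0

namespace ExpLamAux

attribute [local instance] Matrix.linftyOpNormedAddCommGroup Matrix.linftyOpNormedRing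
  Matrix.linftyOpNormedAlgebra

/-- The block matrix with zero bottom rows. -/
def blk (C : Matrix (Fin 3) (Fin 3) ℝ) (v r : Fin 3 → ℝ) : Matrix (Fin 5) (Fin 5) ℝ :=
  Matrix.of fun i j =>
    if hi : (i : ℕ) < 3 then
      if hj : (j : ℕ) < 3 then C ⟨i, hi⟩ ⟨j, hj⟩
      else if (j : ℕ) = 3 then v ⟨i, hi⟩
      else r ⟨i, hi⟩
    else 0

lemma lam_eq (φ ρv ρr : Fin 3 → ℝ) : lamSE23 φ ρv ρr = blk (skew φ) ρv ρr := rfl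

lemma se23_eq (C : Matrix (Fin 3) (Fin 3) ℝ) (v r : Fin 3 → ℝ) :
    se23 C v r = blk (C - 1) v r + 1 := by
  ext i j
  fin_cases i <;> fin_cases j <;>
    simp (config := { decide := true }) [se23, blk, Matrix.one_apply, Matrix.sub_apply]

lemma blk_mul (C C' : Matrix (Fin 3) (Fin 3) ℝ) (v r v' r' : Fin 3 → ℝ) :
    blk C v r * blk C' v' r' = blk (C * C') (C *ᵥ v') (C *ᵥ r') := by
  ext i j
  fin_cases i <;> fin_cases j <;>
    simp (config := { decide := true }) [blk, Matrix.mul_apply, Matrix.mulVec, dotProduct,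
      Fin.sum_univ_five, Fin.sum_univ_three]

lemma blk_pow (C : Matrix (Fin 3) (Fin 3) ℝ) (v r : Fin 3 → ℝ) (n : ℕ) :
    (blk C v r) ^ (n + 1) = blk (C ^ (n + 1)) (C ^ n *ᵥ v) (C ^ n *ᵥ r) := by
  induction n with
  | zero => simp
  | succ n ih =>
      rw [pow_succ, ih, blk_mul, ← pow_succ]

/-- `blk` as a linear map. -/
def blkL : (Matrix (Fin 3) (Fin 3) ℝ × (Fin 3 → ℝ) × (Fin 3 → ℝ)) →ₗ[ℝ]
    Matrix (Fin 5) (Fin 5) ℝ where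
  toFun p := blk p.1 p.2.1 p.2.2
  map_add' p q := by
    ext i j
    fin_cases i <;> fin_cases j <;> simp (config := { decide := true }) [blk]
  map_smul' c p := by
    ext i j
    fin_cases i <;> fin_cases j <;> simp (config := { decide := true }) [blk]

/-- `blk` as a continuous linear map. -/
noncomputable def blkCL : (Matrix (Fin 3) (Fin 3) ℝ × (Fin 3 → ℝ) × (Fin 3 → ℝ)) →L[ℝ]
    Matrix (Fin 5) (Fin 5) ℝ :=
  LinearMap.toContinuousLinearMap blkL

lemma blkCL_apply (C : Matrix (Fin 3) (Fin 3) ℝ) (v r : Fin 3 → ℝ) :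
    blkCL (C, v, r) = blk C v r := rfl


lemma blk_smul (c : ℝ) (C : Matrix (Fin 3) (Fin 3) ℝ) (v r : Fin 3 → ℝ) :
    c • blk C v r = blk (c • C) (c • v) (c • r) := by
  ext i j
  fin_cases i <;> fin_cases j <;>
    simp (config := { decide := true }) [blk, Matrix.smul_apply, Pi.smul_apply, smul_eq_mul]

lemma blk_decomp (C : Matrix (Fin 3) (Fin 3) ℝ) (v r : Fin 3 → ℝ) :
    blk C v r = blk C 0 0 + blk 0 v 0 + blk 0 0 r := by
  ext i j
  fin_cases i <;> fin_cases j <;> simp (config := { decide := true }) [blk]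

/-- `C ↦ blk C 0 0` as a continuous linear map. -/
noncomputable def blkC : Matrix (Fin 3) (Fin 3) ℝ →L[ℝ] Matrix (Fin 5) (Fin 5) ℝ :=
  LinearMap.toContinuousLinearMap
    { toFun := fun C => blk C 0 0
      map_add' := fun C C' => by
        ext i j
        fin_cases i <;> fin_cases j <;> simp (config := { decide := true }) [blk]
      map_smul' := fun c C => by
        ext i j
        fin_cases i <;> fin_cases j <;> simp (config := { decide := true }) [blk] }

/-- `v ↦ blk 0 v 0` as a continuous linear map. -/
noncomputable def blkV : (Fin 3 → ℝ) →L[ℝ] Matrix (Fin 5) (Fin 5) ℝ :=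
  LinearMap.toContinuousLinearMap
    { toFun := fun v => blk 0 v 0
      map_add' := fun v v' => by
        ext i j
        fin_cases i <;> fin_cases j <;> simp (config := { decide := true }) [blk]
      map_smul' := fun c v => by
        ext i j
        fin_cases i <;> fin_cases j <;> simp (config := { decide := true }) [blk] }

/-- `r ↦ blk 0 0 r` as a continuous linear map. -/
noncomputable def blkR : (Fin 3 → ℝ) →L[ℝ] Matrix (Fin 5) (Fin 5) ℝ :=
  LinearMap.toContinuousLinearMap
    { toFun := fun r => blk 0 0 r
      map_add' := fun rr rr' => by
        ext i j
        fin_cases i <;> fin_cases j <;> simp (config := { decide := true }) [blk]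
      map_smul' := fun c rr => by
        ext i j
        fin_cases i <;> fin_cases j <;> simp (config := { decide := true }) [blk] }

/-- `A ↦ A *ᵥ ρ` as a continuous linear map. -/
noncomputable def mvCL (ρ : Fin 3 → ℝ) : Matrix (Fin 3) (Fin 3) ℝ →L[ℝ] (Fin 3 → ℝ) :=
  LinearMap.toContinuousLinearMap
    { toFun := fun A => A *ᵥ ρ
      map_add' := fun A B => Matrix.add_mulVec A B ρ
      map_smul' := fun c A => smul_mulVec c A ρ }

lemma main (φ ρv ρr : Fin 3 → ℝ) :
    NormedSpace.exp (lamSE23 φ ρv ρr)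
      = se23 (NormedSpace.exp (skew φ))
          (Gamma 1 (skew φ) *ᵥ ρv) (Gamma 1 (skew φ) *ᵥ ρr) := by
  set S := skew φ with hS
  have hsumΛ : Summable fun n : ℕ => ((Nat.factorial n : ℝ))⁻¹ • lamSE23 φ ρv ρr ^ n :=
    NormedSpace.expSeries_summable' _
  have hsumS : Summable fun n : ℕ => ((Nat.factorial n : ℝ))⁻¹ • S ^ n :=
    NormedSpace.expSeries_summable' _
  have hA : Summable fun n : ℕ => ((Nat.factorial (n+1) : ℝ))⁻¹ • S ^ (n+1) :=
    hsumS.comp_injective (add_left_injective 1)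
  have hG : Summable fun n : ℕ => ((Nat.factorial (n+1) : ℝ))⁻¹ • S ^ n := by
    refine Summable.of_norm_bounded (Real.summable_pow_div_factorial ‖S‖) fun n => ?_
    have h1 : ‖((Nat.factorial (n+1) : ℝ))⁻¹‖ ≤ ((Nat.factorial n : ℝ))⁻¹ := by
      rw [Real.norm_eq_abs, abs_of_nonneg (by positivity)]
      exact inv_anti₀ (by positivity)
        (by exact_mod_cast Nat.factorial_le (Nat.le_succ n))
    have h2 : ‖S ^ n‖ ≤ ‖S‖ ^ n := norm_pow_le _ _
    rw [norm_smul, div_eq_inv_mul]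
    exact mul_le_mul h1 h2 (norm_nonneg _) (by positivity)
  have hGv : ∀ ρ : Fin 3 → ℝ, Gamma 1 S *ᵥ ρ
      = ∑' n : ℕ, ((Nat.factorial (n+1) : ℝ))⁻¹ • (S ^ n *ᵥ ρ) := by
    intro ρ
    have h1 : Gamma 1 S *ᵥ ρ = mvCL ρ (∑' n : ℕ, ((Nat.factorial (n+1) : ℝ))⁻¹ • S ^ n) := by
      simp only [Gamma]
      rfl
    rw [h1, (mvCL ρ).map_tsum hG]
    congr 1
    funext n
    rw [(mvCL ρ).map_smul]
    rfl
  have hGsum : ∀ ρ : Fin 3 → ℝ,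
      Summable fun n : ℕ => ((Nat.factorial (n+1) : ℝ))⁻¹ • (S ^ n *ᵥ ρ) := by
    intro ρ
    have := hG.map (mvCL ρ).toLinearMap.toAddMonoidHom (mvCL ρ).continuous
    refine this.congr fun n => ?_
    show mvCL ρ (((Nat.factorial (n+1) : ℝ))⁻¹ • S ^ n) = _
    rw [(mvCL ρ).map_smul]; rfl
  simp only [NormedSpace.exp_eq_tsum ℝ]
  rw [Summable.tsum_eq_zero_add hsumΛ, Summable.tsum_eq_zero_add hsumS]
  simp only [pow_zero, Nat.factorial_zero, Nat.cast_one, inv_one, one_smul]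
  rw [se23_eq]
  rw [add_sub_cancel_left]
  rw [add_comm]
  congr 1
  have hterm : ∀ n : ℕ, ((Nat.factorial (n+1) : ℝ))⁻¹ • lamSE23 φ ρv ρr ^ (n+1)
      = blkC (((Nat.factorial (n+1) : ℝ))⁻¹ • S ^ (n+1))
        + blkV (((Nat.factorial (n+1) : ℝ))⁻¹ • (S ^ n *ᵥ ρv))
        + blkR (((Nat.factorial (n+1) : ℝ))⁻¹ • (S ^ n *ᵥ ρr)) := by
    intro n
    rw [lam_eq, blk_pow, blk_smul]
    show blk _ _ _ = blk _ 0 0 + blk 0 _ 0 + blk 0 0 _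
    exact blk_decomp _ _ _
  calc (∑' n : ℕ, ((Nat.factorial (n+1) : ℝ))⁻¹ • lamSE23 φ ρv ρr ^ (n+1))
      = ∑' n : ℕ, (blkC (((Nat.factorial (n+1) : ℝ))⁻¹ • S ^ (n+1))
        + blkV (((Nat.factorial (n+1) : ℝ))⁻¹ • (S ^ n *ᵥ ρv))
        + blkR (((Nat.factorial (n+1) : ℝ))⁻¹ • (S ^ n *ᵥ ρr))) := by
        exact tsum_congr hterm
    _ = blkC (∑' n : ℕ, ((Nat.factorial (n+1) : ℝ))⁻¹ • S ^ (n+1))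
        + blkV (∑' n : ℕ, ((Nat.factorial (n+1) : ℝ))⁻¹ • (S ^ n *ᵥ ρv))
        + blkR (∑' n : ℕ, ((Nat.factorial (n+1) : ℝ))⁻¹ • (S ^ n *ᵥ ρr)) := by
        have sC : Summable fun n : ℕ =>
            blkC (((Nat.factorial (n+1) : ℝ))⁻¹ • S ^ (n+1)) :=
          (hA.map blkC.toLinearMap.toAddMonoidHom blkC.continuous).congr fun n => rfl
        have sV : Summable fun n : ℕ =>
            blkV (((Nat.factorial (n+1) : ℝ))⁻¹ • (S ^ n *ᵥ ρv)) :=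
          ((hGsum ρv).map blkV.toLinearMap.toAddMonoidHom blkV.continuous).congr fun n => rfl
        have sR : Summable fun n : ℕ =>
            blkR (((Nat.factorial (n+1) : ℝ))⁻¹ • (S ^ n *ᵥ ρr)) :=
          ((hGsum ρr).map blkR.toLinearMap.toAddMonoidHom blkR.continuous).congr fun n => rfl
        rw [Summable.tsum_add (sC.add sV) sR, Summable.tsum_add sC sV,
          blkC.map_tsum hA, blkV.map_tsum (hGsum ρv), blkR.map_tsum (hGsum ρr)]
    _ = blk (∑' n : ℕ, ((Nat.factorial (n+1) : ℝ))⁻¹ • S ^ (n+1))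
          (Gamma 1 S *ᵥ ρv) (Gamma 1 S *ᵥ ρr) := by
        rw [hGv, hGv]
        exact (blk_decomp _ _ _).symm

end ExpLamAux

open ExpLamAux in
/-- The exponential of `Λ(φ, ρ_v, ρ_r)` is
`[[exp(skew φ), J ρ_v, J ρ_r], [0, 1, 0], [0, 0, 1]]` with `J = Γ₁(skew φ)`. -/
theorem exp_lamSE23 (φ ρv ρr : Fin 3 → ℝ) :
    NormedSpace.exp (lamSE23 φ ρv ρr)
      = se23 (NormedSpace.exp (skew φ))
          (Gamma 1 (skew φ) *ᵥ ρv) (Gamma 1 (skew φ) *ᵥ ρr) :=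
  ExpLamAux.main φ ρv ρr
end

section
/- Let ω, f ∈ ℝ³ and set K = skew(ω). Define Φ : ℝ → 3×3 real matrices by Φ(t) = −exp(−t·K)·skew(Γ₁(t·K)·f)·t. Then Φ(0) = 0 and, for every t ∈ ℝ, Φ is differentiable at t with Φ'(t) = −skew(f)·exp(−t·K) − K·Φ(t). (This is the closed-form solution for the left-invariant state transition matrix block Φ₂₁ satisfying Φ̇₂₁ = −(f̃ᵇ×)Φ₁₁ − (ω̃ᵇ×)Φ₂₁ with Φ₁₁(t) = exp(−t·K).) -/
open Matrix

attribute [local instance] Matrix.linftyOpNormedAddCommGroup Matrix.linftyOpNormedSpace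

attribute [local instance] Matrix.linftyOpNormedRing Matrix.linftyOpNormedAlgebra
  Matrix.linfty_opNormOneClass

lemma skew_add (a b : Fin 3 → ℝ) : skew (a + b) = skew a + skew b := by
  ext i j
  fin_cases i <;> fin_cases j <;> simp [skew] <;> ring

lemma skew_smul (c : ℝ) (a : Fin 3 → ℝ) : skew (c • a) = c • skew a := by
  ext i j
  fin_cases i <;> fin_cases j <;> simp [skew]

lemma skew_transpose (a : Fin 3 → ℝ) : (skew a)ᵀ = -skew a := by
  ext i j
  fin_cases i <;> fin_cases j <;> simp [skew]

lemma cross_identity (M : Matrix (Fin 3) (Fin 3) ℝ) (u : Fin 3 → ℝ) :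
    Mᵀ * skew (M *ᵥ u) * M = M.det • skew u := by
  ext i j
  fin_cases i <;> fin_cases j <;>
    simp [skew, Matrix.mul_apply, Matrix.mulVec, Matrix.det_fin_three, dotProduct,
      Fin.sum_univ_three] <;> ring

lemma exp_skew_transpose (K : Matrix (Fin 3) (Fin 3) ℝ) (hsk : Kᵀ = -K) (s : ℝ) :
    (NormedSpace.exp (s • K))ᵀ = NormedSpace.exp (-(s • K)) := by
  rw [← Matrix.exp_transpose, Matrix.transpose_smul, hsk, smul_neg]

lemma exp_neg_mul_exp (K : Matrix (Fin 3) (Fin 3) ℝ) (s : ℝ) :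
    NormedSpace.exp (-(s • K)) * NormedSpace.exp (s • K) = 1 := by
  rw [← Matrix.exp_add_of_commute (-(s • K)) (s • K) (Commute.neg_left rfl), neg_add_cancel,
    NormedSpace.exp_zero]

lemma exp_mul_exp_neg (K : Matrix (Fin 3) (Fin 3) ℝ) (s : ℝ) :
    NormedSpace.exp (s • K) * NormedSpace.exp (-(s • K)) = 1 := by
  rw [← Matrix.exp_add_of_commute (s • K) (-(s • K)) (Commute.neg_right rfl), add_neg_cancel,
    NormedSpace.exp_zero]

lemma det_exp_one (K : Matrix (Fin 3) (Fin 3) ℝ) (hsk : Kᵀ = -K) (t : ℝ) :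
    (NormedSpace.exp (t • K)).det = 1 := by
  set D : ℝ → ℝ := fun s => (NormedSpace.exp (s • K)).det with hD
  have hcont : Continuous D :=
    (NormedSpace.exp_continuous.comp (continuous_id.smul continuous_const)).matrix_det
  have hsq : ∀ s : ℝ, D s ^ 2 = 1 := by
    intro s
    have := congrArg Matrix.det (exp_neg_mul_exp K s)
    rw [Matrix.det_mul, ← exp_skew_transpose K hsk, Matrix.det_transpose, Matrix.det_one] at this
    simpa [hD, sq] using this
  have hD0 : D 0 = 1 := by simp [hD]
  by_contra h
  have ht' : D t = -1 := by
    have h2 : (D t - 1) * (D t + 1) = 0 := by nlinarith [hsq t]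
    rcases mul_eq_zero.1 h2 with h3 | h3
    · exact absurd (by linarith) h
    · linarith
  have hmem : (0 : ℝ) ∈ Set.uIcc (D 0) (D t) := by
    rw [hD0, ht', Set.mem_uIcc]; norm_num
  obtain ⟨s, _, hs⟩ := intermediate_value_uIcc (hcont.continuousOn (s := Set.uIcc 0 t)) hmem
  have := hsq s
  rw [hs] at this
  norm_num at this

lemma norm_bound (K : Matrix (Fin 3) (Fin 3) ℝ) (c s : ℝ) (n : ℕ)
    (hc : |c| ≤ ((n.factorial : ℝ))⁻¹) :
    ‖(s ^ n * c) • K ^ n‖ ≤ (|s| * ‖K‖) ^ n / n.factorial := by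
  rw [norm_smul]
  have hK : ‖K ^ n‖ ≤ ‖K‖ ^ n := norm_pow_le K n
  have h0 : (0:ℝ) < n.factorial := by positivity
  calc ‖s ^ n * c‖ * ‖K ^ n‖ ≤ (|s| ^ n * ((n.factorial : ℝ))⁻¹) * ‖K‖ ^ n := by
        apply mul_le_mul _ hK (norm_nonneg _) (by positivity)
        rw [Real.norm_eq_abs, abs_mul, abs_pow]
        exact mul_le_mul_of_nonneg_left hc (by positivity)
    _ = (|s| * ‖K‖) ^ n / n.factorial := by rw [mul_pow]; ring

lemma summable_g (K : Matrix (Fin 3) (Fin 3) ℝ) (s : ℝ) :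
    Summable fun n : ℕ => (s ^ n * (((n + 1).factorial : ℝ))⁻¹) • K ^ n := by
  apply Summable.of_norm_bounded (g := fun n : ℕ => (|s| * ‖K‖) ^ n / n.factorial)
    (Real.summable_pow_div_factorial _)
  intro n
  apply norm_bound
  rw [abs_of_nonneg (by positivity)]
  gcongr
  omega

lemma psi_eq (K : Matrix (Fin 3) (Fin 3) ℝ) (s : ℝ) :
    s • Gamma 1 (s • K)
      = ∑' n : ℕ, (s ^ (n + 1) * (((n + 1).factorial : ℝ))⁻¹) • K ^ n := by
  rw [Gamma]
  have h1 : ∀ n : ℕ, (((n + 1).factorial : ℝ))⁻¹ • (s • K) ^ n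
      = (s ^ n * (((n + 1).factorial : ℝ))⁻¹) • K ^ n := by
    intro n; rw [smul_pow, smul_smul, mul_comm]
  simp_rw [h1]
  rw [← Summable.tsum_const_smul s (summable_g K s)]
  refine tsum_congr fun n => ?_
  rw [smul_smul]
  congr 1
  ring

lemma hasDerivAt_psi (K : Matrix (Fin 3) (Fin 3) ℝ) (t : ℝ) :
    HasDerivAt (fun s : ℝ => s • Gamma 1 (s • K)) (NormedSpace.exp (t • K)) t := by
  have hfun : (fun s : ℝ => s • Gamma 1 (s • K))
      = fun s => ∑' n : ℕ, (s ^ (n + 1) * (((n + 1).factorial : ℝ))⁻¹) • K ^ n :=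
    funext (psi_eq K)
  have hexp : NormedSpace.exp (t • K)
      = ∑' n : ℕ, ((↑(n + 1) : ℝ) * t ^ n * (((n + 1).factorial : ℝ))⁻¹) • K ^ n := by
    rw [NormedSpace.exp_eq_tsum (𝕂 := ℝ)]
    refine tsum_congr fun n => ?_
    rw [smul_pow, smul_smul]
    congr 1
    rw [Nat.factorial_succ]
    push_cast
    have h0 : ((n.factorial : ℝ)) ≠ 0 := by exact_mod_cast n.factorial_pos.ne'
    field_simp
  rw [hfun, hexp]
  refine hasDerivAt_tsum_of_isPreconnected
    (F := Matrix (Fin 3) (Fin 3) ℝ)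
    (g := fun (n : ℕ) (s : ℝ) => (s ^ (n + 1) * (((n + 1).factorial : ℝ))⁻¹) • K ^ n)
    (g' := fun (n : ℕ) (s : ℝ) => ((↑(n + 1) : ℝ) * s ^ n * (((n + 1).factorial : ℝ))⁻¹) • K ^ n)
    (u := fun n : ℕ => ((|t| + 1) * ‖K‖) ^ n / n.factorial)
    (Real.summable_pow_div_factorial _) Metric.isOpen_ball
    (convex_ball (0:ℝ) (|t|+1)).isPreconnected
    (fun n y _ => ?_) (fun n y hy => ?_) (show (t:ℝ) ∈ Metric.ball (0:ℝ) (|t|+1) by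
      rw [mem_ball_zero_iff, Real.norm_eq_abs]; linarith) ?_
    (show (t:ℝ) ∈ Metric.ball (0:ℝ) (|t|+1) by
      rw [mem_ball_zero_iff, Real.norm_eq_abs]; linarith)
  · have := ((hasDerivAt_pow (n + 1) y).mul_const
      ((((n + 1).factorial : ℝ))⁻¹)).smul_const (K ^ n)
    simpa using this
  · have hy' : |y| ≤ |t| + 1 := by
      have := mem_ball_zero_iff.mp hy
      rw [Real.norm_eq_abs] at this
      linarith
    have hb := norm_bound K ((↑(n + 1) : ℝ) * (((n + 1).factorial : ℝ))⁻¹) y n (by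
      rw [Nat.factorial_succ]
      push_cast
      rw [abs_of_nonneg (by positivity)]
      rw [mul_inv, ← mul_assoc, mul_inv_cancel₀ (by positivity), one_mul])
    calc ‖((↑(n + 1) : ℝ) * y ^ n * (((n + 1).factorial : ℝ))⁻¹) • K ^ n‖
        = ‖(y ^ n * ((↑(n + 1) : ℝ) * (((n + 1).factorial : ℝ))⁻¹)) • K ^ n‖ := by ring_nf
      _ ≤ (|y| * ‖K‖) ^ n / n.factorial := hb
      _ ≤ ((|t| + 1) * ‖K‖) ^ n / n.factorial := by gcongr
  · refine ((summable_g K t).const_smul t).congr fun n => ?_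
    rw [smul_smul]
    congr 1
    ring

/-- `M ↦ skew (M *ᵥ f)` as a linear map. -/
def skewMulVecL (f : Fin 3 → ℝ) :
    Matrix (Fin 3) (Fin 3) ℝ →ₗ[ℝ] Matrix (Fin 3) (Fin 3) ℝ where
  toFun M := skew (M *ᵥ f)
  map_add' M N := by simp only [Matrix.add_mulVec, skew_add]
  map_smul' c M := by simp only [Matrix.smul_mulVec, skew_smul, RingHom.id_apply]

/-- The closed-form left-invariant state transition block
`Φ(t) = −exp(−t K) skew(Γ₁(t K) f) t` (with `K = skew ω`) satisfies `Φ(0) = 0` and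
`Φ'(t) = −skew(f) exp(−t K) − K Φ(t)`. -/
theorem phi21_closed_form (ω f : Fin 3 → ℝ)
    (K : Matrix (Fin 3) (Fin 3) ℝ) (hK : K = skew ω)
    (Φ : ℝ → Matrix (Fin 3) (Fin 3) ℝ)
    (hΦ : ∀ t : ℝ, Φ t = -(t • (NormedSpace.exp (-(t • K)) * skew (Gamma 1 (t • K) *ᵥ f)))) :
    Φ 0 = 0 ∧
      ∀ t : ℝ, HasDerivAt Φ
        (-(skew f * NormedSpace.exp (-(t • K))) - K * Φ t) t := by
  have hsk : Kᵀ = -K := by rw [hK]; exact skew_transpose ω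
  have hΦ' : ∀ s : ℝ, Φ s
      = -(NormedSpace.exp (-(s • K)) * skew ((s • Gamma 1 (s • K)) *ᵥ f)) := by
    intro s
    rw [hΦ s, Matrix.smul_mulVec, skew_smul, mul_smul_comm]
  constructor
  · rw [hΦ 0]; simp
  intro t
  set B := NormedSpace.exp (t • K) with hB
  set E := NormedSpace.exp (-(t • K)) with hE
  set S := skew ((t • Gamma 1 (t • K)) *ᵥ f) with hS
  -- derivative of exp (-(s•K))
  have hdE : HasDerivAt (fun s : ℝ => NormedSpace.exp (-(s • K))) (-(K * E)) t := by
    have h := hasDerivAt_exp_smul_const' (𝕂 := ℝ) (-K) t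
    simp only [smul_neg, neg_mul] at h
    exact h
  -- derivative of s ↦ skew ((s • Gamma 1 (s•K)) *ᵥ f)
  have hdS : HasDerivAt (fun s : ℝ => skew ((s • Gamma 1 (s • K)) *ᵥ f)) (skew (B *ᵥ f)) t := by
    have hL := (LinearMap.toContinuousLinearMap (skewMulVecL f)).hasFDerivAt
      (x := t • Gamma 1 (t • K))
    have := hL.comp_hasDerivAt t (hasDerivAt_psi K t)
    simp [skewMulVecL, Function.comp] at this
    exact this
  have hdΦ : HasDerivAt Φ (-(-(K * E) * S + E * skew (B *ᵥ f))) t := by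
    have h := (hdE.mul hdS).neg
    have hfun : (fun s : ℝ =>
        -(NormedSpace.exp (-(s • K)) * skew ((s • Gamma 1 (s • K)) *ᵥ f))) = Φ :=
      funext fun s => (hΦ' s).symm
    rw [← hfun]
    exact h
  -- key conjugation identity
  have hkey : E * skew (B *ᵥ f) = skew f * E := by
    have hc := cross_identity B f
    rw [hB, exp_skew_transpose K hsk, det_exp_one K hsk, one_smul, ← hE, ← hB] at hc
    have hBE : B * E = 1 := by rw [hB, hE]; exact exp_mul_exp_neg K t
    calc E * skew (B *ᵥ f) = E * skew (B *ᵥ f) * (B * E) := by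
          rw [hBE, mul_one]
      _ = (E * skew (B *ᵥ f) * B) * E := by rw [mul_assoc, mul_assoc, mul_assoc]
      _ = skew f * E := by rw [hc]
  have hval : -(-(K * E) * S + E * skew (B *ᵥ f)) = -(skew f * E) - K * Φ t := by
    rw [hkey, hΦ' t, ← hE]
    noncomm_ring
  rwa [hval] at hdΦ
end
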